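/- arXiv:2511.15889 — 6 statements merged into one kernel-verified Lean document; each statement's English description precedes it below -/
import Mathlib

section
/- Let E be an n×n real matrix. If there exists a diagonal positive definite matrix P such that EᵀP + PE - 2P is negative definite, then for every diagonal positive definite matrix Θ with Θ ⪯ Iₙ, the matrix Iₙ - ΘE is invertible (equivalently, rank(Iₙ - ΘE) = n). -/
open Matrix

/-- Lemma 1: diagonal Lyapunov condition implies `I - ΘE` invertible for all
diagonal `0 ≺ Θ ⪯ I`. -/
theorem stmt_0 {n : ℕ} (E : Matrix (Fin n) (Fin n) ℝ)
    (h : ∃ d : Fin n → ℝ, (∀ i, 0 < d i) ∧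
      (∀ v : Fin n → ℝ, v ≠ 0 →
        v ⬝ᵥ ((Eᵀ * Matrix.diagonal d + Matrix.diagonal d * E
          - (2 : ℝ) • Matrix.diagonal d) *ᵥ v) < 0)) :
    ∀ θ : Fin n → ℝ, (∀ i, 0 < θ i ∧ θ i ≤ 1) →
      IsUnit (1 - Matrix.diagonal θ * E) := by
  obtain ⟨d, hd, hlyap⟩ := h
  intro θ hθ
  rw [Matrix.isUnit_iff_isUnit_det, isUnit_iff_ne_zero]
  intro hdet
  obtain ⟨v, hv, hMv⟩ := (Matrix.exists_mulVec_eq_zero_iff).mpr hdet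
  have hw : ∀ i, (E *ᵥ v) i = v i / θ i := by
    intro i
    have hc := congrFun hMv i
    simp [Matrix.sub_mulVec, Matrix.one_mulVec, ← Matrix.mulVec_mulVec,
      Matrix.mulVec_diagonal, sub_eq_zero] at hc
    rw [eq_div_iff (hθ i).1.ne', hc]
    ring
  have hS : v ⬝ᵥ ((Eᵀ * Matrix.diagonal d + Matrix.diagonal d * E
      - (2 : ℝ) • Matrix.diagonal d) *ᵥ v)
      = ∑ i, 2 * d i * v i ^ 2 * (1 - θ i) / θ i := by
    rw [Matrix.sub_mulVec, Matrix.add_mulVec, dotProduct_sub, dotProduct_add]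
    rw [← Matrix.mulVec_mulVec, ← Matrix.mulVec_mulVec, Matrix.smul_mulVec,
      dotProduct_smul, Matrix.dotProduct_mulVec (v := v) (A := Eᵀ),
      Matrix.vecMul_transpose]
    simp only [dotProduct, Matrix.mulVec_diagonal, smul_eq_mul, Finset.mul_sum]
    rw [← Finset.sum_add_distrib, ← Finset.sum_sub_distrib]
    apply Finset.sum_congr rfl
    intro i _
    have hθi : θ i ≠ 0 := (hθ i).1.ne'
    rw [hw i]
    field_simp
    ring
  have hnn : 0 ≤ ∑ i, 2 * d i * v i ^ 2 * (1 - θ i) / θ i := by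
    apply Finset.sum_nonneg
    intro i _
    have h1 := (hθ i).1
    have h2 := (hθ i).2
    apply div_nonneg _ h1.le
    have h3 : (0:ℝ) ≤ 1 - θ i := by linarith
    exact mul_nonneg (mul_nonneg (mul_nonneg (by norm_num) (hd i).le) (sq_nonneg _)) h3
  have hlt := hlyap v hv
  rw [hS] at hlt
  linarith
end

section
/- Let E be an n×n real matrix and Θ a diagonal positive definite matrix with Θ ⪯ Iₙ. If there exists a diagonal positive definite matrix Q such that (ΘE)Q + Q(ΘE)ᵀ - 2Q is negative definite, then every eigenvalue λ of ΘE satisfies Re(λ) < 1. -/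
open Matrix Finset

/-- If `(ΘE)Q + Q(ΘE)ᵀ - 2Q ≺ 0` for some diagonal positive definite `Q`,
then every (complex) eigenvalue of `ΘE` has real part `< 1`. -/
theorem stmt_1 {n : ℕ} (E : Matrix (Fin n) (Fin n) ℝ) (θ : Fin n → ℝ)
    (hθ : ∀ i, 0 < θ i ∧ θ i ≤ 1)
    (h : ∃ q : Fin n → ℝ, (∀ i, 0 < q i) ∧
      (∀ v : Fin n → ℝ, v ≠ 0 →
        v ⬝ᵥ (((Matrix.diagonal θ * E) * Matrix.diagonal q
          + Matrix.diagonal q * (Matrix.diagonal θ * E)ᵀ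
          - (2 : ℝ) • Matrix.diagonal q) *ᵥ v) < 0)) :
    ∀ (μ : ℂ) (v : Fin n → ℂ), v ≠ 0 →
      ((Matrix.diagonal θ * E).map (algebraMap ℝ ℂ)) *ᵥ v = μ • v → μ.re < 1 := by
  obtain ⟨q, hq, hS⟩ := h
  intro μ v hv hev
  set M := Matrix.diagonal θ * E with hM
  set a : Fin n → ℝ := fun i => (v i).re with ha
  set b : Fin n → ℝ := fun i => (v i).im with hb
  -- componentwise eigen equations
  have heig : ∀ i, (∑ j, M i j * a j = μ.re * a i - μ.im * b i) ∧
      (∑ j, M i j * b j = μ.re * b i + μ.im * a i) := by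
    intro i
    have h1 := congrFun hev i
    simp only [mulVec, dotProduct, Matrix.map_apply, Pi.smul_apply, smul_eq_mul,
      algebraMap_apply] at h1
    constructor
    · have := congrArg Complex.re h1
      simpa [Complex.re_sum, Complex.mul_re] using this
    · have := congrArg Complex.im h1
      simpa [Complex.im_sum, Complex.mul_im] using this
  -- quadratic form identity
  have key : ∀ x : Fin n → ℝ,
      (fun i => x i / q i) ⬝ᵥ ((M * Matrix.diagonal q + Matrix.diagonal q * Mᵀ
        - (2 : ℝ) • Matrix.diagonal q) *ᵥ (fun i => x i / q i))
      = 2 * (∑ i, (x i / q i) * ∑ j, M i j * x j) - 2 * ∑ i, x i ^ 2 / q i := by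
    intro x
    have hdq : ∀ j, x j / q j * q j = x j := fun j => div_mul_cancel₀ _ (hq j).ne'
    simp only [dotProduct, mulVec, Matrix.sub_apply, Matrix.add_apply, Matrix.smul_apply,
      Matrix.mul_diagonal, Matrix.diagonal_mul, Matrix.transpose_apply, smul_eq_mul]
    have e1 : ∀ i, ∑ j, (M i j * q j + q i * M j i - 2 * Matrix.diagonal q i j) * (x j / q j)
        = (∑ j, M i j * x j) + q i * (∑ j, M j i * (x j / q j)) - 2 * q i * (x i / q i) := by
      intro i
      simp only [sub_mul, add_mul]
      rw [Finset.sum_sub_distrib, Finset.sum_add_distrib]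
      congr 1
      · congr 1
        · exact Finset.sum_congr rfl fun j _ => by rw [mul_assoc, mul_comm (q j), hdq j]
        · rw [Finset.mul_sum]; exact Finset.sum_congr rfl fun j _ => by ring
      · rw [Finset.sum_eq_single i]
        · rw [Matrix.diagonal_apply_eq]
        · intro j _ hji
          simp [Matrix.diagonal_apply_ne' q hji]
        · simp
    have swap : ∑ i, x i * ∑ j, M j i * (x j / q j)
        = ∑ i, (x i / q i) * ∑ j, M i j * x j := by
      simp_rw [Finset.mul_sum]
      rw [Finset.sum_comm]
      exact Finset.sum_congr rfl fun j _ => Finset.sum_congr rfl fun i _ => by ring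
    calc ∑ i, (x i / q i) * ∑ j, (M i j * q j + q i * M j i - 2 * Matrix.diagonal q i j) * (x j / q j)
        = ∑ i, ((x i / q i) * (∑ j, M i j * x j)
            + x i * (∑ j, M j i * (x j / q j)) - 2 * (x i ^ 2 / q i)) := by
          refine Finset.sum_congr rfl fun i _ => ?_
          rw [e1 i]
          have h1 : x i / q i * (q i * ∑ j, M j i * (x j / q j))
              = x i * ∑ j, M j i * (x j / q j) := by
            rw [← mul_assoc, mul_comm (x i / q i) (q i), mul_comm (q i) (x i / q i), hdq i]
          have h2 : x i / q i * (2 * q i * (x i / q i)) = 2 * (x i ^ 2 / q i) := by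
            have : q i * (x i / q i) = x i := by rw [mul_comm]; exact hdq i
            rw [mul_assoc 2, this]; ring
          rw [mul_sub, mul_add, h1, h2]
      _ = 2 * (∑ i, (x i / q i) * ∑ j, M i j * x j) - 2 * ∑ i, x i ^ 2 / q i := by
          rw [Finset.sum_sub_distrib, Finset.sum_add_distrib, swap, ← Finset.mul_sum]
          ring
  -- apply hypothesis to a and b
  set N := ∑ i, (a i ^ 2 + b i ^ 2) / q i with hN
  have hNpos : 0 < N := by
    have hvi : ∃ i, v i ≠ 0 := by
      by_contra hc
      push_neg at hc
      exact hv (funext fun i => hc i)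
    obtain ⟨i, hi⟩ := hvi
    have h1 : 0 < (a i ^ 2 + b i ^ 2) / q i := by
      apply div_pos _ (hq i)
      have := Complex.normSq_pos.mpr hi
      simpa [Complex.normSq_apply, ha, hb, sq] using this
    refine lt_of_lt_of_le h1 (Finset.single_le_sum (f := fun i => (a i ^ 2 + b i ^ 2) / q i)
      (fun j _ => ?_) (Finset.mem_univ i))
    exact div_nonneg (by positivity) (hq j).le
  -- value of quadratic form at a and b
  have hfa : (fun i => a i / q i) ⬝ᵥ ((M * Matrix.diagonal q + Matrix.diagonal q * Mᵀ
        - (2 : ℝ) • Matrix.diagonal q) *ᵥ (fun i => a i / q i))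
      + (fun i => b i / q i) ⬝ᵥ ((M * Matrix.diagonal q + Matrix.diagonal q * Mᵀ
        - (2 : ℝ) • Matrix.diagonal q) *ᵥ (fun i => b i / q i))
      = 2 * (μ.re - 1) * N := by
    rw [key a, key b]
    have ea : ∑ i, (a i / q i) * ∑ j, M i j * a j
        = ∑ i, (a i / q i) * (μ.re * a i - μ.im * b i) :=
      Finset.sum_congr rfl fun i _ => by rw [(heig i).1]
    have eb : ∑ i, (b i / q i) * ∑ j, M i j * b j
        = ∑ i, (b i / q i) * (μ.re * b i + μ.im * a i) :=
      Finset.sum_congr rfl fun i _ => by rw [(heig i).2]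
    rw [ea, eb]
    have sA : ∑ i, a i / q i * (μ.re * a i - μ.im * b i)
        + ∑ i, b i / q i * (μ.re * b i + μ.im * a i) = μ.re * N := by
      rw [hN, Finset.mul_sum, ← Finset.sum_add_distrib]
      refine Finset.sum_congr rfl fun i _ => ?_
      have hqi := (hq i).ne'
      field_simp
      ring
    have sB : ∑ i, a i ^ 2 / q i + ∑ i, b i ^ 2 / q i = N := by
      rw [hN, ← Finset.sum_add_distrib]
      exact Finset.sum_congr rfl fun i _ => (add_div _ _ _).symm
    linarith
  -- negativity of the sum
  have hone : (fun i => a i / q i) ≠ 0 ∨ (fun i => b i / q i) ≠ 0 := by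
    by_contra hc
    push_neg at hc
    apply hv
    funext i
    have h1 := congrFun hc.1 i
    have h2 := congrFun hc.2 i
    simp only [Pi.zero_apply, div_eq_zero_iff] at h1 h2
    have h1' : a i = 0 := h1.resolve_right (hq i).ne'
    have h2' : b i = 0 := h2.resolve_right (hq i).ne'
    exact Complex.ext (by simpa using h1') (by simpa using h2')
  have hle : ∀ x : Fin n → ℝ, x ⬝ᵥ ((M * Matrix.diagonal q + Matrix.diagonal q * Mᵀ
        - (2 : ℝ) • Matrix.diagonal q) *ᵥ x) ≤ 0 := by
    intro x
    by_cases hx : x = 0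
    · simp [hx]
    · exact (hS x hx).le
  have hneg : 2 * (μ.re - 1) * N < 0 := by
    rw [← hfa]
    rcases hone with h1 | h1
    · exact add_lt_of_lt_of_nonpos (hS _ h1) (hle _)
    · exact add_lt_of_nonpos_of_lt (hle _) (hS _ h1)
  nlinarith
end

section
/- Let P be a symmetric positive definite n×n real matrix, V(x) = xᵀPx, and F : ℝⁿ → ℝⁿ continuous with F(0) = 0 and V(F(x)) < V(x) for all x ≠ 0 with V(x) ≤ γ. Then for every initial condition x₀ with V(x₀) ≤ γ, the trajectory x(k+1) = F(x(k)) converges to 0 as k → ∞. -/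
open Matrix Filter

lemma coercive_aux {n : ℕ} (hn : n ≠ 0) (P : Matrix (Fin n) (Fin n) ℝ) (hP : P.PosDef) :
    ∃ c > 0, ∀ x : Fin n → ℝ, c * ‖x‖ ^ 2 ≤ x ⬝ᵥ (P *ᵥ x) := by
  set V : (Fin n → ℝ) → ℝ := fun x => x ⬝ᵥ (P *ᵥ x) with hV
  have hVc : Continuous V := (continuous_id).dotProduct (continuous_const.matrix_mulVec continuous_id)
  have hVpos : ∀ x : Fin n → ℝ, x ≠ 0 → 0 < V x := by
    intro x hx
    simpa using hP.dotProduct_mulVec_pos hx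
  haveI : Nonempty (Fin n) := ⟨⟨0, Nat.pos_of_ne_zero hn⟩⟩
  have hsph : (Metric.sphere (0 : Fin n → ℝ) 1).Nonempty := by
    rw [NormedSpace.sphere_nonempty]; norm_num
  have hcomp : IsCompact (Metric.sphere (0 : Fin n → ℝ) 1) := isCompact_sphere 0 1
  obtain ⟨x₀, hx₀, hmin⟩ := hcomp.exists_isMinOn hsph hVc.continuousOn
  have hx₀norm : ‖x₀‖ = 1 := by simpa using hx₀
  have hx₀ne : x₀ ≠ 0 := by intro h; rw [h] at hx₀norm; simp at hx₀norm
  refine ⟨V x₀, hVpos x₀ hx₀ne, ?_⟩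
  intro x
  by_cases hx : x = 0
  · simp [hx, hV]
  · have hnx : (0:ℝ) < ‖x‖ := norm_pos_iff.mpr hx
    set u : Fin n → ℝ := ‖x‖⁻¹ • x with hu
    have hunorm : u ∈ Metric.sphere (0 : Fin n → ℝ) 1 := by
      simp [hu, norm_smul, abs_of_pos (inv_pos.mpr hnx), inv_mul_cancel₀ hnx.ne']
    have hVu : V u = ‖x‖⁻¹ * (‖x‖⁻¹ * V x) := by
      simp [hV, hu, Matrix.mulVec_smul, smul_dotProduct, dotProduct_smul, smul_eq_mul]
    have hmin' : V x₀ ≤ V u := hmin hunorm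
    rw [hVu] at hmin'
    have h2 : V x₀ * ‖x‖ ^ 2 ≤ ‖x‖⁻¹ * (‖x‖⁻¹ * V x) * ‖x‖ ^ 2 := by
      nlinarith [sq_nonneg ‖x‖]
    show V x₀ * ‖x‖ ^ 2 ≤ V x
    calc V x₀ * ‖x‖ ^ 2 ≤ ‖x‖⁻¹ * (‖x‖⁻¹ * V x) * ‖x‖ ^ 2 := h2
      _ = V x := by
          have h1 : ‖x‖⁻¹ * ‖x‖ = 1 := inv_mul_cancel₀ hnx.ne'
          linear_combination V x * (‖x‖⁻¹ * ‖x‖ + 1) * h1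


/-- Discrete-time Lyapunov convergence: trajectories starting in the sublevel
set `{V ≤ γ}` of `V(x) = xᵀPx` converge to the origin. -/
theorem stmt_12 {n : ℕ} (P : Matrix (Fin n) (Fin n) ℝ) (hP : P.PosDef)
    (γ : ℝ) (hγ : 0 < γ) (F : (Fin n → ℝ) → (Fin n → ℝ))
    (hFc : Continuous F) (hF0 : F 0 = 0)
    (hdec : ∀ x : Fin n → ℝ, x ⬝ᵥ (P *ᵥ x) ≤ γ → x ≠ 0 →
      (F x) ⬝ᵥ (P *ᵥ F x) < x ⬝ᵥ (P *ᵥ x)) :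
    ∀ x : ℕ → Fin n → ℝ, (x 0) ⬝ᵥ (P *ᵥ x 0) ≤ γ →
      (∀ k, x (k + 1) = F (x k)) →
      Tendsto x atTop (nhds 0) := by
  intro x hx0 hstep
  rcases eq_or_ne n 0 with hn | hn
  · subst hn
    have : x = fun _ => 0 := funext fun k => Subsingleton.elim _ _
    rw [this]; exact tendsto_const_nhds
  set V : (Fin n → ℝ) → ℝ := fun y => y ⬝ᵥ (P *ᵥ y) with hVdef
  have hVc : Continuous V :=
    (continuous_id).dotProduct (continuous_const.matrix_mulVec continuous_id)
  have hVpos : ∀ y : Fin n → ℝ, y ≠ 0 → 0 < V y := by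
    intro y hy; simpa using hP.dotProduct_mulVec_pos hy
  have hV0 : V 0 = 0 := by simp [hVdef]
  have hVnn : ∀ y : Fin n → ℝ, 0 ≤ V y := by
    intro y
    by_cases hy : y = 0
    · simp [hy, hV0]
    · exact (hVpos y hy).le
  obtain ⟨c, hc, hcoer⟩ := coercive_aux hn P hP
  -- invariance and monotonicity
  have key : ∀ k, V (x k) ≤ γ ∧ V (x (k + 1)) ≤ V (x k) := by
    have step : ∀ k, V (x k) ≤ γ → V (x (k + 1)) ≤ V (x k) := by
      intro k hk
      by_cases hz : x k = 0
      · rw [hstep k, hz, hF0]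
      · rw [hstep k]; exact (hdec (x k) hk hz).le
    intro k
    induction k with
    | zero => exact ⟨hx0, step 0 hx0⟩
    | succ m ih =>
        have h1 : V (x (m + 1)) ≤ γ := ih.2.trans ih.1
        exact ⟨h1, step (m + 1) h1⟩
  have hγk : ∀ k, V (x k) ≤ γ := fun k => (key k).1
  have hmono : Antitone fun k => V (x k) :=
    antitone_nat_of_succ_le fun k => (key k).2
  have hbdd : BddBelow (Set.range fun k => V (x k)) :=
    ⟨0, by rintro _ ⟨k, rfl⟩; exact hVnn _⟩
  set L : ℝ := ⨅ k, V (x k) with hLdef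
  have hLle : ∀ k, L ≤ V (x k) := fun k => ciInf_le hbdd k
  have hL0 : 0 ≤ L := le_ciInf fun k => hVnn _
  have hVtend : Tendsto (fun k => V (x k)) atTop (nhds L) :=
    tendsto_atTop_ciInf hmono hbdd
  -- L = 0
  have hLzero : L = 0 := by
    by_contra hLne
    have hLpos : 0 < L := lt_of_le_of_ne hL0 (Ne.symm hLne)
    set K : Set (Fin n → ℝ) := {y | V y ≤ γ ∧ L ≤ V y} with hKdef
    have hKclosed : IsClosed K :=
      (isClosed_le hVc continuous_const).inter (isClosed_le continuous_const hVc)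
    have hKbdd : Bornology.IsBounded K := by
      apply (Metric.isBounded_iff_subset_closedBall 0).mpr
      refine ⟨Real.sqrt (γ / c), fun y hy => ?_⟩
      have h1 : c * ‖y‖ ^ 2 ≤ γ := (hcoer y).trans hy.1
      have h2 : ‖y‖ ^ 2 ≤ γ / c := (le_div_iff₀' hc).mpr h1
      have h3 : ‖y‖ ≤ Real.sqrt (γ / c) := by
        rw [show ‖y‖ = Real.sqrt (‖y‖ ^ 2) by rw [Real.sqrt_sq (norm_nonneg y)]]
        exact Real.sqrt_le_sqrt h2
      simpa [Metric.mem_closedBall, dist_zero_right] using h3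
    have hKcomp : IsCompact K := Metric.isCompact_of_isClosed_isBounded hKclosed hKbdd
    have hKne : K.Nonempty := ⟨x 0, hγk 0, hLle 0⟩
    have hgc : Continuous fun y => V y - V (F y) := hVc.sub (hVc.comp hFc)
    obtain ⟨y₀, hy₀K, hy₀min⟩ := hKcomp.exists_isMinOn hKne hgc.continuousOn
    set δ : ℝ := V y₀ - V (F y₀) with hδ
    have hy₀ne : y₀ ≠ 0 := by
      intro h
      have h2 : L ≤ V y₀ := hy₀K.2
      rw [h, hV0] at h2
      exact absurd h2 (not_le.mpr hLpos)
    have hδpos : 0 < δ := sub_pos.mpr (hdec y₀ hy₀K.1 hy₀ne)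
    have hdrop : ∀ k, V (x (k + 1)) ≤ V (x k) - δ := by
      intro k
      have hmem : x k ∈ K := ⟨hγk k, hLle k⟩
      have := hy₀min hmem
      rw [hstep k]
      have h2 : δ ≤ V (x k) - V (F (x k)) := this
      linarith
    have hsum : ∀ k : ℕ, V (x k) ≤ V (x 0) - k * δ := by
      intro k
      induction k with
      | zero => simp
      | succ m ih =>
          have := hdrop m
          push_cast
          push_cast at ih
          linarith
    obtain ⟨k, hk⟩ := Archimedean.arch (V (x 0) - L + 1) hδpos
    have hk' : V (x 0) - L < k * δ := by
      have : (k : ℝ) * δ = k • δ := by simp [nsmul_eq_mul]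
      rw [this]; linarith [hk]
    have := hsum k
    have := hLle k
    linarith
  rw [hLzero] at hVtend
  -- conclude x → 0
  rw [tendsto_zero_iff_norm_tendsto_zero]
  have h1 : Tendsto (fun k => c * ‖x k‖ ^ 2) atTop (nhds 0) :=
    squeeze_zero (fun k => by positivity) (fun k => (hcoer (x k))) hVtend
  have h2 : Tendsto (fun k => ‖x k‖ ^ 2) atTop (nhds 0) := by
    have := h1.div_const c
    simpa [mul_div_assoc, mul_div_cancel_left₀ _ hc.ne'] using this
  have h3 : Tendsto (fun k => Real.sqrt (‖x k‖ ^ 2)) atTop (nhds 0) := by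
    simpa using h2.sqrt
  simpa [Real.sqrt_sq (norm_nonneg _)] using h3
end

section
/- Let 𝒜_K, ℬ_{s,K} be real matrices of sizes n×n and n×ν, Ã_K of size ν×n, B̃_{s,K} of size ν×ν, P ∈ 𝕊₊ⁿ, S diagonal positive definite ν×ν, and Λ diagonal positive semidefinite with Λ ≺ I_ν. Suppose the matrix inequality [[P, -Ã_KᵀS],[-SÃ_K, U_S]] - [𝒜_K; ℬ_{s,K}]ᵀ P [𝒜_K, ℬ_{s,K}] ≻ -M(Λ) holds, where U_S = (I-B̃_{s,K})ᵀS + S(I-B̃_{s,K}) and M(Λ) = [[Ã_Kᵀ, Ã_Kᵀ],[B̃_{s,K}ᵀ, (B̃_{s,K}-I)ᵀ]]·diag(SΛ, SΛ)·[[Ã_K, B̃_{s,K}-I],[Ã_K, B̃_{s,K}]]. Then for any vectors ξ ∈ ℝⁿ, Δs ∈ ℝ^ν with (ξ, Δs) ≠ 0 satisfying the sector inequality (Δv - Δs)ᵀS(Δs - ΛΔv) ≥ 0 with Δv = Ã_Kξ + B̃_{s,K}Δs, it holds that (𝒜_Kξ + ℬ_{s,K}Δs)ᵀ P (𝒜_Kξ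 + ℬ_{s,K}Δs) < ξᵀPξ. -/
open Matrix

private lemma symm_dot' {n : ℕ} (M : Matrix (Fin n) (Fin n) ℝ) (h : Mᵀ = M)
    (a b : Fin n → ℝ) : a ⬝ᵥ (M *ᵥ b) = b ⬝ᵥ (M *ᵥ a) := by
  rw [dotProduct_mulVec, ← h, vecMul_transpose, dotProduct_comm, h]

private lemma trans_dot' {n m : ℕ} (A : Matrix (Fin n) (Fin m) ℝ) (a : Fin m → ℝ)
    (b : Fin n → ℝ) : a ⬝ᵥ (Aᵀ *ᵥ b) = (A *ᵥ a) ⬝ᵥ b := by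
  rw [dotProduct_mulVec, vecMul_transpose]

private lemma dmul' {ν : ℕ} (v w : Fin ν → ℝ) : Matrix.diagonal v *ᵥ w = v * w := by
  ext i; simp [mulVec_diagonal]

private lemma dsym1' {ν : ℕ} (v a b : Fin ν → ℝ) : a ⬝ᵥ (v * b) = b ⬝ᵥ (v * a) := by
  simp only [dotProduct, Pi.mul_apply]; exact Finset.sum_congr rfl fun i _ => by ring

private lemma dsym2' {ν : ℕ} (v w a b : Fin ν → ℝ) :
    a ⬝ᵥ (v * (w * b)) = b ⬝ᵥ (v * (w * a)) := by
  simp only [dotProduct, Pi.mul_apply]; exact Finset.sum_congr rfl fun i _ => by ring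

/-- S-procedure step of Theorem 3: the strict matrix inequality combined with
the incremental sector inequality implies strict decrease of the quadratic
Lyapunov function along the closed-loop velocity-form dynamics. -/
theorem stmt_13 {n ν : ℕ}
    (AK : Matrix (Fin n) (Fin n) ℝ) (BsK : Matrix (Fin n) (Fin ν) ℝ)
    (AtK : Matrix (Fin ν) (Fin n) ℝ) (BtsK : Matrix (Fin ν) (Fin ν) ℝ)
    (P : Matrix (Fin n) (Fin n) ℝ) (hP : P.PosDef)
    (sd ld : Fin ν → ℝ) (hsd : ∀ i, 0 < sd i)
    (hld : ∀ i, 0 ≤ ld i ∧ ld i < 1)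
    (hLMI :
      (Matrix.fromBlocks P (-(AtKᵀ * Matrix.diagonal sd))
          (-(Matrix.diagonal sd * AtK))
          ((1 - BtsK)ᵀ * Matrix.diagonal sd + Matrix.diagonal sd * (1 - BtsK))
        - (Matrix.fromCols AK BsK)ᵀ * P * Matrix.fromCols AK BsK
        + Matrix.fromBlocks AtKᵀ AtKᵀ BtsKᵀ (BtsK - 1)ᵀ
            * Matrix.fromBlocks (Matrix.diagonal sd * Matrix.diagonal ld) 0 0
                (Matrix.diagonal sd * Matrix.diagonal ld)
            * Matrix.fromBlocks AtK (BtsK - 1) AtK BtsK).PosDef) :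
    ∀ (ξ : Fin n → ℝ) (Δs : Fin ν → ℝ), ¬(ξ = 0 ∧ Δs = 0) →
      ((AtK *ᵥ ξ + BtsK *ᵥ Δs) - Δs) ⬝ᵥ
        (Matrix.diagonal sd *ᵥ
          (Δs - Matrix.diagonal ld *ᵥ (AtK *ᵥ ξ + BtsK *ᵥ Δs))) ≥ 0 →
      (AK *ᵥ ξ + BsK *ᵥ Δs) ⬝ᵥ (P *ᵥ (AK *ᵥ ξ + BsK *ᵥ Δs)) < ξ ⬝ᵥ (P *ᵥ ξ) := by
  intro ξ Δs hne hsec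
  have hPsym : Pᵀ = P := hP.isHermitian.eq
  have hx : Sum.elim ξ Δs ≠ 0 := by
    intro hc
    apply hne
    constructor <;> [ext i; ext i]
    · exact congrFun hc (Sum.inl i)
    · exact congrFun hc (Sum.inr i)
  have hq : 0 < (Sum.elim ξ Δs) ⬝ᵥ
      ((Matrix.fromBlocks P (-(AtKᵀ * Matrix.diagonal sd))
          (-(Matrix.diagonal sd * AtK))
          ((1 - BtsK)ᵀ * Matrix.diagonal sd + Matrix.diagonal sd * (1 - BtsK))
        - (Matrix.fromCols AK BsK)ᵀ * P * Matrix.fromCols AK BsK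
        + Matrix.fromBlocks AtKᵀ AtKᵀ BtsKᵀ (BtsK - 1)ᵀ
            * Matrix.fromBlocks (Matrix.diagonal sd * Matrix.diagonal ld) 0 0
                (Matrix.diagonal sd * Matrix.diagonal ld)
            * Matrix.fromBlocks AtK (BtsK - 1) AtK BtsK) *ᵥ (Sum.elim ξ Δs)) := by
    simpa using hLMI.dotProduct_mulVec_pos hx
  have key : (Sum.elim ξ Δs) ⬝ᵥ
      ((Matrix.fromBlocks P (-(AtKᵀ * Matrix.diagonal sd))
          (-(Matrix.diagonal sd * AtK))
          ((1 - BtsK)ᵀ * Matrix.diagonal sd + Matrix.diagonal sd * (1 - BtsK))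
        - (Matrix.fromCols AK BsK)ᵀ * P * Matrix.fromCols AK BsK
        + Matrix.fromBlocks AtKᵀ AtKᵀ BtsKᵀ (BtsK - 1)ᵀ
            * Matrix.fromBlocks (Matrix.diagonal sd * Matrix.diagonal ld) 0 0
                (Matrix.diagonal sd * Matrix.diagonal ld)
            * Matrix.fromBlocks AtK (BtsK - 1) AtK BtsK) *ᵥ (Sum.elim ξ Δs))
    = ξ ⬝ᵥ (P *ᵥ ξ) - (AK *ᵥ ξ + BsK *ᵥ Δs) ⬝ᵥ (P *ᵥ (AK *ᵥ ξ + BsK *ᵥ Δs))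
      - 2 * (((AtK *ᵥ ξ + BtsK *ᵥ Δs) - Δs) ⬝ᵥ
        (Matrix.diagonal sd *ᵥ
          (Δs - Matrix.diagonal ld *ᵥ (AtK *ᵥ ξ + BtsK *ᵥ Δs)))) := by
    simp only [sub_mulVec, add_mulVec, ← mulVec_mulVec, fromBlocks_mulVec,
      transpose_fromCols, fromCols_mulVec_sumElim, fromRows_mulVec,
      Sum.elim_comp_inl, Sum.elim_comp_inr, dotProduct_sub, dotProduct_add,
      sumElim_dotProduct_sumElim, mulVec_add, mulVec_sub, neg_mulVec,
      dotProduct_neg, transpose_sub, transpose_one, Matrix.one_mulVec,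
      Matrix.zero_mulVec, add_zero, zero_add, dotProduct_zero, mulVec_zero,
      trans_dot', dmul', sub_dotProduct, add_dotProduct]
    linarith [dsym1' sd Δs (AtK *ᵥ ξ), dsym1' sd Δs (BtsK *ᵥ Δs),
      dsym2' sd ld (AtK *ᵥ ξ) Δs, dsym2' sd ld (BtsK *ᵥ Δs) Δs,
      dsym2' sd ld (AtK *ᵥ ξ) (BtsK *ᵥ Δs),
      symm_dot' P hPsym (AK *ᵥ ξ) (BsK *ᵥ Δs)]
  rw [key] at hq
  linarith
end

section
/- Let S be a ν×ν diagonal positive definite matrix and B̃ a ν×ν real matrix. If (I - B̃)ᵀS + S(I - B̃) is positive definite, then B̃ᵀS + SB̃ - 2S is negative definite, and hence for every diagonal matrix Θ with entries in (0,1], I - ΘB̃ is invertible. -/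
open Matrix

/-- If `(I-B̃)ᵀS + S(I-B̃) ≻ 0` with `S` diagonal positive definite, then
`B̃ᵀS + SB̃ - 2S ≺ 0`, and `I - ΘB̃` is invertible for every diagonal `Θ`
with entries in `(0,1]`. -/
theorem stmt_14 {ν : ℕ} (sd : Fin ν → ℝ) (hsd : ∀ i, 0 < sd i)
    (Bt : Matrix (Fin ν) (Fin ν) ℝ)
    (hpos : ((1 - Bt)ᵀ * Matrix.diagonal sd
      + Matrix.diagonal sd * (1 - Bt)).PosDef) :
    (∀ v : Fin ν → ℝ, v ≠ 0 →
      v ⬝ᵥ ((Btᵀ * Matrix.diagonal sd + Matrix.diagonal sd * Bt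
        - (2 : ℝ) • Matrix.diagonal sd) *ᵥ v) < 0)
    ∧ ∀ θ : Fin ν → ℝ, (∀ i, θ i ∈ Set.Ioc (0 : ℝ) 1) →
        IsUnit (1 - Matrix.diagonal θ * Bt) := by
  have heq : (Btᵀ * Matrix.diagonal sd + Matrix.diagonal sd * Bt
        - (2 : ℝ) • Matrix.diagonal sd)
      = -((1 - Bt)ᵀ * Matrix.diagonal sd + Matrix.diagonal sd * (1 - Bt)) := by
    rw [Matrix.transpose_sub, Matrix.transpose_one, Matrix.sub_mul, Matrix.mul_sub,
      Matrix.one_mul, Matrix.mul_one, two_smul]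
    abel
  have key : ∀ v : Fin ν → ℝ, v ≠ 0 →
      v ⬝ᵥ ((Btᵀ * Matrix.diagonal sd + Matrix.diagonal sd * Bt
        - (2 : ℝ) • Matrix.diagonal sd) *ᵥ v) < 0 := by
    intro v hv
    have h := (Matrix.posDef_iff_dotProduct_mulVec.mp hpos).2 hv
    rw [heq, Matrix.neg_mulVec, dotProduct_neg]
    exact neg_neg_of_pos (by simpa using h)
  refine ⟨key, ?_⟩
  intro θ hθ
  rw [Matrix.isUnit_iff_isUnit_det, isUnit_iff_ne_zero]
  intro hdet
  obtain ⟨v, hv0, hMv⟩ := Matrix.exists_mulVec_eq_zero_iff.mpr hdet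
  have hveq : ∀ i, v i = θ i * (Bt *ᵥ v) i := by
    intro i
    have := congrFun hMv i
    simp [Matrix.sub_mulVec, ← Matrix.mulVec_mulVec, Matrix.mulVec_diagonal,
      sub_eq_zero] at this
    simpa using this
  set w := Bt *ᵥ v with hw
  have hexp : v ⬝ᵥ ((Btᵀ * Matrix.diagonal sd + Matrix.diagonal sd * Bt
        - (2 : ℝ) • Matrix.diagonal sd) *ᵥ v)
      = ∑ i, (2 * sd i * (v i * w i) - 2 * sd i * v i ^ 2) := by
    rw [Matrix.sub_mulVec, Matrix.add_mulVec, ← Matrix.mulVec_mulVec,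
      ← Matrix.mulVec_mulVec, Matrix.smul_mulVec]
    rw [dotProduct_sub, dotProduct_add, dotProduct_smul]
    rw [Matrix.dotProduct_mulVec v Btᵀ, Matrix.vecMul_transpose]
    simp only [dotProduct, Matrix.mulVec_diagonal, smul_eq_mul, ← hw]
    rw [Finset.mul_sum, ← Finset.sum_add_distrib, ← Finset.sum_sub_distrib]
    apply Finset.sum_congr rfl
    intro i _
    ring
  have h := key v hv0
  rw [hexp] at h
  have hnn : 0 ≤ ∑ i, (2 * sd i * (v i * w i) - 2 * sd i * v i ^ 2) := by
    apply Finset.sum_nonneg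
    intro i _
    have hθi := hθ i
    have h1 : 0 < θ i := hθi.1
    have h2 : θ i ≤ 1 := hθi.2
    rw [hveq i]
    nlinarith [mul_nonneg (mul_nonneg (mul_nonneg (hsd i).le h1.le)
      (sub_nonneg.2 h2)) (sq_nonneg (w i))]
  linarith
end

section
/- Let Q ∈ 𝕊₊ⁿ and E ∈ ℝⁿˣⁿ with QEᵀ + EQ - 2Q ≺ 0, and let Θ be a diagonal positive definite matrix with Θ ⪯ I. Then Θ(QEᵀ + EQ - 2Q)Θ ≺ 0, and if moreover Q is diagonal, setting Q̃ = QΘ (which is diagonal positive definite), it holds that (ΘE)Q̃ + Q̃(ΘE)ᵀ - 2Q̃ ≺ 0. -/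
open Matrix

/-- Congruence by a diagonal `0 ≺ Θ ⪯ I` preserves negative definiteness of
`QEᵀ + EQ - 2Q`, and when `Q` is diagonal, setting `Q̃ = QΘ` we get
`(ΘE)Q̃ + Q̃(ΘE)ᵀ - 2Q̃ ≺ 0`. -/
theorem stmt_15 {n : ℕ} (qd : Fin n → ℝ) (hqd : ∀ i, 0 < qd i)
    (E : Matrix (Fin n) (Fin n) ℝ) (θ : Fin n → ℝ)
    (hθ : ∀ i, θ i ∈ Set.Ioc (0 : ℝ) 1)
    (hneg : ∀ v : Fin n → ℝ, v ≠ 0 →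
      v ⬝ᵥ ((Matrix.diagonal qd * Eᵀ + E * Matrix.diagonal qd
        - (2 : ℝ) • Matrix.diagonal qd) *ᵥ v) < 0) :
    (∀ v : Fin n → ℝ, v ≠ 0 →
      v ⬝ᵥ ((Matrix.diagonal θ *
        (Matrix.diagonal qd * Eᵀ + E * Matrix.diagonal qd
          - (2 : ℝ) • Matrix.diagonal qd) * Matrix.diagonal θ) *ᵥ v) < 0)
    ∧ (∀ v : Fin n → ℝ, v ≠ 0 →
        v ⬝ᵥ (((Matrix.diagonal θ * E) * (Matrix.diagonal qd * Matrix.diagonal θ)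
          + (Matrix.diagonal qd * Matrix.diagonal θ) * (Matrix.diagonal θ * E)ᵀ
          - (2 : ℝ) • (Matrix.diagonal qd * Matrix.diagonal θ)) *ᵥ v) < 0) := by
  set M := Matrix.diagonal qd * Eᵀ + E * Matrix.diagonal qd
      - (2 : ℝ) • Matrix.diagonal qd with hM
  -- Θ v ≠ 0 for v ≠ 0
  have hDv : ∀ v : Fin n → ℝ, v ≠ 0 → Matrix.diagonal θ *ᵥ v ≠ 0 := by
    intro v hv h
    apply hv
    funext i
    have := congrFun h i
    simp [Matrix.mulVec_diagonal] at this
    rcases this with h1 | h1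
    · exact absurd h1 (ne_of_gt (hθ i).1)
    · exact h1
  -- congruence identity
  have key : ∀ v : Fin n → ℝ,
      v ⬝ᵥ ((Matrix.diagonal θ * M * Matrix.diagonal θ) *ᵥ v)
        = (Matrix.diagonal θ *ᵥ v) ⬝ᵥ (M *ᵥ (Matrix.diagonal θ *ᵥ v)) := by
    intro v
    rw [← Matrix.mulVec_mulVec, ← Matrix.mulVec_mulVec, Matrix.dotProduct_mulVec]
    congr 1
    funext i
    simp [Matrix.vecMul_diagonal, Matrix.mulVec_diagonal, mul_comm]
  have part1 : ∀ v : Fin n → ℝ, v ≠ 0 →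
      v ⬝ᵥ ((Matrix.diagonal θ * M * Matrix.diagonal θ) *ᵥ v) < 0 := by
    intro v hv
    rw [key v]
    exact hneg _ (hDv v hv)
  refine ⟨part1, ?_⟩
  intro v hv
  -- the second matrix equals ΘMΘ + diagonal correction
  have hmat : (Matrix.diagonal θ * E) * (Matrix.diagonal qd * Matrix.diagonal θ)
      + (Matrix.diagonal qd * Matrix.diagonal θ) * (Matrix.diagonal θ * E)ᵀ
      - (2 : ℝ) • (Matrix.diagonal qd * Matrix.diagonal θ)
      = Matrix.diagonal θ * M * Matrix.diagonal θ
        + Matrix.diagonal (fun i => 2 * qd i * θ i * (θ i - 1)) := by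
    rw [hM]
    ext i j
    by_cases h : i = j
    · subst h
      simp [Matrix.mul_apply, Matrix.diagonal_apply, Finset.mul_sum,
        Matrix.transpose_apply, Matrix.sub_apply, Matrix.add_apply,
        Matrix.smul_apply]
      ring
    · simp [Matrix.mul_apply, Matrix.diagonal_apply, Finset.mul_sum,
        Matrix.transpose_apply, Matrix.sub_apply, Matrix.add_apply,
        Matrix.smul_apply, h]
      ring
  rw [hmat, Matrix.add_mulVec, dotProduct_add]
  have h2 : v ⬝ᵥ (Matrix.diagonal (fun i => 2 * qd i * θ i * (θ i - 1)) *ᵥ v) ≤ 0 := by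
    simp only [dotProduct, Matrix.mulVec_diagonal]
    apply Finset.sum_nonpos
    intro i _
    have : 2 * qd i * θ i * (θ i - 1) ≤ 0 := by
      have h1 := hqd i
      have h2 := (hθ i).1
      apply mul_nonpos_of_nonneg_of_nonpos
      · positivity
      · linarith [(hθ i).2]
    nlinarith [sq_nonneg (v i)]
  linarith [part1 v hv]
end
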